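/- Suppose the policy class D is closed under scalar shrinkage (for every d ∈ D and m ∈ (0,1), m·d ∈ D) and the value map d ↦ V(d) is L-Lipschitz with respect to the sup norm on policies d : X → [0,1]. If ĉ(d) ≤ c + ε for all d with c(d) ≤ c (where c, ε > 0 and ĉ, c are positively homogeneous: ĉ(md) = m·ĉ(d)), then max over the true feasible set {c(d) ≤ c} of V̂(d) minus max over the estimated feasible set {ĉ(d) ≤ c} of V̂(d) is at most Lε/(c+ε). -/

import Mathlib

/-- Shrinkage argument for constrained policy learning: if the policy class is closed under
scalar shrinkage, `V̂` is `L`-Lipschitz in sup norm, `ĉ` is positively homogeneous and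
`ĉ(d) ≤ c + ε` whenever `c₀(d) ≤ c`, then the maximum of `V̂` over the true feasible set
exceeds its maximum over the estimated feasible set by at most `Lε/(c+ε)`. -/
theorem shrinkage_feasibility_gap {X : Type*} (D : Set (X → ℝ))
    (Vhat chat c₀ : (X → ℝ) → ℝ) (L c ε : ℝ)
    (hL : 0 ≤ L) (hc : 0 < c) (hε : 0 < ε)
    (hrange : ∀ d ∈ D, ∀ x, d x ∈ Set.Icc (0:ℝ) 1)
    (hshrink : ∀ d ∈ D, ∀ m : ℝ, m ∈ Set.Ioo (0:ℝ) 1 → (fun x => m * d x) ∈ D)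
    (hlip : ∀ d₁ ∈ D, ∀ d₂ ∈ D, ∀ M : ℝ, (∀ x, |d₁ x - d₂ x| ≤ M) →
      |Vhat d₁ - Vhat d₂| ≤ L * M)
    (hhom : ∀ d ∈ D, ∀ m : ℝ, m ∈ Set.Ioo (0:ℝ) 1 → chat (fun x => m * d x) = m * chat d)
    (hc0nonneg : ∀ d ∈ D, 0 ≤ c₀ d) (hchatnonneg : ∀ d ∈ D, 0 ≤ chat d)
    (hfeas : ∀ d ∈ D, c₀ d ≤ c → chat d ≤ c + ε)
    (d₁ d₂ : X → ℝ)
    (hd₁D : d₁ ∈ D) (hd₁feas : c₀ d₁ ≤ c)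
    (hd₁max : ∀ d ∈ D, c₀ d ≤ c → Vhat d ≤ Vhat d₁)
    (hd₂D : d₂ ∈ D) (hd₂feas : chat d₂ ≤ c)
    (hd₂max : ∀ d ∈ D, chat d ≤ c → Vhat d ≤ Vhat d₂) :
    Vhat d₁ - Vhat d₂ ≤ L * ε / (c + ε) := by
  have hce : 0 < c + ε := by linarith
  set m : ℝ := c / (c + ε) with hm
  have hm0 : 0 < m := div_pos hc hce
  have hm1 : m < 1 := (div_lt_one hce).2 (by linarith)
  have hmIoo : m ∈ Set.Ioo (0:ℝ) 1 := ⟨hm0, hm1⟩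
  have hd' : (fun x => m * d₁ x) ∈ D := hshrink d₁ hd₁D m hmIoo
  have hchat' : chat (fun x => m * d₁ x) ≤ c := by
    rw [hhom d₁ hd₁D m hmIoo]
    have h1 : chat d₁ ≤ c + ε := hfeas d₁ hd₁D hd₁feas
    calc m * chat d₁ ≤ m * (c + ε) := by
          exact mul_le_mul_of_nonneg_left h1 hm0.le
      _ = c := by rw [hm]; field_simp
  have hV' : Vhat (fun x => m * d₁ x) ≤ Vhat d₂ := hd₂max _ hd' hchat'
  have hlipb : |Vhat d₁ - Vhat (fun x => m * d₁ x)| ≤ L * (1 - m) := by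
    apply hlip d₁ hd₁D _ hd' (1 - m)
    intro x
    have hx := hrange d₁ hd₁D x
    have : d₁ x - m * d₁ x = (1 - m) * d₁ x := by ring
    rw [this, abs_mul, abs_of_nonneg (by linarith : (0:ℝ) ≤ 1 - m),
      abs_of_nonneg hx.1]
    nlinarith [hx.2]
  have h1m : 1 - m = ε / (c + ε) := by rw [hm]; field_simp; ring
  have : Vhat d₁ - Vhat (fun x => m * d₁ x) ≤ L * (1 - m) :=
    (le_abs_self _).trans hlipb
  rw [h1m] at this
  have := this
  linarith [mul_div_assoc L ε (c + ε)]
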